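/- arXiv:1408.6481 — 3 statements merged into one kernel-verified Lean document; each statement's English description precedes it below -/
import Mathlib

section
/- For every real number p ≥ 2 and every t > 0, |((t^p - 1)/p) - (t - 1)| ≥ (1/p)·|t - 1|^p. -/
open Real

private lemma superadd {x y q : ℝ} (hx : 0 ≤ x) (hy : 0 ≤ y) (hq : 1 ≤ q) :
    x ^ q + y ^ q ≤ (x + y) ^ q := by
  have := NNReal.add_rpow_le_rpow_add (x.toNNReal) (y.toNNReal) hq
  have h := NNReal.coe_le_coe.2 this
  push_cast [NNReal.coe_rpow] at h
  rwa [Real.coe_toNNReal _ hx, Real.coe_toNNReal _ hy] at h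

private lemma self_le {x q : ℝ} (hx : 0 ≤ x) (hx1 : x ≤ 1) (hq : 1 ≤ q) :
    x ^ q ≤ x := by
  rcases eq_or_lt_of_le hx with h | h
  · rw [← h, Real.zero_rpow (by linarith)]
  · calc x ^ q ≤ x ^ (1:ℝ) := Real.rpow_le_rpow_of_exponent_ge h hx1 hq
    _ = x := Real.rpow_one x

private lemma key (p t : ℝ) (hp : 2 ≤ p) (ht : 0 < t) :
    |t - 1| ^ p ≤ t ^ p - 1 - p * (t - 1) := by
  have hp1 : (1:ℝ) ≤ p := by linarith
  have hp1' : (1:ℝ) ≤ p - 1 := by linarith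
  rcases le_or_gt 1 t with h1 | h1
  · -- t ≥ 1 : F t = t^p - 1 - p(t-1) - (t-1)^p monotone on [1, ∞)
    set F : ℝ → ℝ := fun s => s ^ p - 1 - p * (s - 1) - (s - 1) ^ p with hF
    have hderiv : ∀ s : ℝ, 0 < s → HasDerivAt F
        (p * s ^ (p - 1) - p - 1 * p * (s - 1) ^ (p - 1)) s := by
      intro s hs
      have h1 : HasDerivAt (fun s : ℝ => s ^ p) (p * s ^ (p - 1)) s :=
        Real.hasDerivAt_rpow_const (Or.inl hs.ne')
      have h2 : HasDerivAt (fun s : ℝ => (s - 1) ^ p) (1 * p * (s - 1) ^ (p - 1)) s := by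
        have hinner : HasDerivAt (fun s : ℝ => s - 1) 1 s :=
          (hasDerivAt_id s).sub_const 1
        exact hinner.rpow_const (Or.inr hp1)
      have h3 : HasDerivAt (fun s : ℝ => p * (s - 1)) p s := by
        simpa using ((hasDerivAt_id s).sub_const 1).const_mul p
      exact (((h1.sub_const 1).sub h3).sub h2).congr_deriv (by ring)
    have hmono : MonotoneOn F (Set.Ici 1) := by
      apply monotoneOn_of_deriv_nonneg (convex_Ici 1)
      · have hc1 : Continuous fun s : ℝ => s ^ p := by
          rw [continuous_iff_continuousAt]
          exact fun x => Real.continuousAt_rpow_const x p (Or.inr (by linarith))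
        have hc2 : Continuous fun s : ℝ => (s - 1) ^ p :=
          (continuous_id.sub continuous_const).rpow_const (fun x => Or.inr (by linarith))
        exact (((hc1.sub continuous_const).sub (by fun_prop)).sub hc2).continuousOn
      · intro s hs
        rw [interior_Ici] at hs
        exact ((hderiv s (by simp at hs; linarith)).differentiableAt).differentiableWithinAt
      · intro s hs
        rw [interior_Ici] at hs
        simp only [Set.mem_Ioi] at hs
        rw [(hderiv s (by linarith)).deriv]
        have hsup : 1 ^ (p - 1) + (s - 1) ^ (p - 1) ≤ (1 + (s - 1)) ^ (p - 1) :=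
          superadd (by norm_num) (by linarith) hp1'
        rw [Real.one_rpow] at hsup
        have : (1:ℝ) + (s - 1) = s := by ring
        rw [this] at hsup
        nlinarith [hsup]
    have := hmono (Set.self_mem_Ici) (Set.mem_Ici.2 h1) h1
    have hF1 : F 1 = 0 := by
      simp [hF, Real.one_rpow, Real.zero_rpow (by linarith : p ≠ 0)]
    rw [hF1] at this
    rw [abs_of_nonneg (by linarith)]
    simp only [hF] at this
    linarith
  · -- t < 1 : G antitone on [0,1]
    set G : ℝ → ℝ := fun s => s ^ p - 1 - p * (s - 1) - (1 - s) ^ p with hG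
    have hderiv : ∀ s : ℝ, 0 < s → HasDerivAt G
        (p * s ^ (p - 1) - p - (-1) * p * (1 - s) ^ (p - 1)) s := by
      intro s hs
      have h1 : HasDerivAt (fun s : ℝ => s ^ p) (p * s ^ (p - 1)) s :=
        Real.hasDerivAt_rpow_const (Or.inl hs.ne')
      have h2 : HasDerivAt (fun s : ℝ => (1 - s) ^ p) ((-1) * p * (1 - s) ^ (p - 1)) s := by
        have hinner : HasDerivAt (fun s : ℝ => 1 - s) (-1) s := by
          simpa using ((hasDerivAt_id s).const_sub 1)
        exact hinner.rpow_const (Or.inr hp1)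
      have h3 : HasDerivAt (fun s : ℝ => p * (s - 1)) p s := by
        simpa using ((hasDerivAt_id s).sub_const 1).const_mul p
      exact (((h1.sub_const 1).sub h3).sub h2).congr_deriv (by ring)
    have hanti : AntitoneOn G (Set.Icc 0 1) := by
      apply antitoneOn_of_deriv_nonpos (convex_Icc 0 1)
      · have hc1 : Continuous fun s : ℝ => s ^ p := by
          rw [continuous_iff_continuousAt]
          exact fun x => Real.continuousAt_rpow_const x p (Or.inr (by linarith))
        have hc2 : Continuous fun s : ℝ => (1 - s) ^ p :=
          (continuous_const.sub continuous_id).rpow_const (fun x => Or.inr (by linarith))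
        exact (((hc1.sub continuous_const).sub (by fun_prop)).sub hc2).continuousOn
      · intro s hs
        rw [interior_Icc] at hs
        exact ((hderiv s hs.1).differentiableAt).differentiableWithinAt
      · intro s hs
        rw [interior_Icc] at hs
        obtain ⟨hs0, hs1⟩ := hs
        rw [(hderiv s hs0).deriv]
        have ha : s ^ (p - 1) ≤ s := self_le hs0.le hs1.le hp1'
        have hb : (1 - s) ^ (p - 1) ≤ 1 - s := self_le (by linarith) (by linarith) hp1'
        nlinarith
    have := hanti (Set.mem_Icc.2 ⟨ht.le, h1.le⟩) (Set.mem_Icc.2 ⟨by norm_num, le_refl 1⟩) h1.le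
    have hG1 : G 1 = 0 := by
      simp [hG, Real.one_rpow, Real.zero_rpow (by linarith : p ≠ 0)]
    rw [hG1] at this
    rw [abs_of_neg (by linarith)]
    simp only [hG] at this
    have : (1 - t) ^ p ≤ t ^ p - 1 - p * (t - 1) := by linarith
    convert this using 2
    ring

theorem stmt_0 (p t : ℝ) (hp : 2 ≤ p) (ht : 0 < t) :
    |((t ^ p - 1) / p) - (t - 1)| ≥ (1 / p) * |t - 1| ^ p := by
  have hp0 : 0 < p := by linarith
  have hkey := key p t hp ht
  have habs : (0:ℝ) ≤ |t - 1| ^ p := Real.rpow_nonneg (abs_nonneg _) p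
  have hnum : 0 ≤ t ^ p - 1 - p * (t - 1) := le_trans habs hkey
  have heq : ((t ^ p - 1) / p) - (t - 1) = (t ^ p - 1 - p * (t - 1)) / p := by
    field_simp
  rw [heq, abs_of_nonneg (div_nonneg hnum hp0.le), ge_iff_le, one_div, inv_mul_eq_div]
  gcongr
end

section
/- Let u : ℝ^N → ℝ be C³ with bounded derivatives and Φ_t(x) = x + tη(x) + (t²/2)ζ(x) with η, ζ ∈ C^2 compactly supported. Then for each y, the function t ↦ u(Φ_t^{-1}(y)) has Taylor expansion u(y) − t·(∇u(y)·η(y)) + (t²/2)·X₀(y) + O(t³), where X₀(y) = ⟨D²u(y)·η(y), η(y)⟩ + ⟨∇u(y), 2∇η(y)·η(y) − ζ(y)⟩. -/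
open Filter Topology

/-- If `F` is `C^2` at `x`, then `deriv F` is differentiable at `x`. -/
lemma aux_deriv_diff {E : Type*} [NormedAddCommGroup E] [NormedSpace ℝ E]
    {F : ℝ → E} {x : ℝ} (h : ContDiffAt ℝ 2 F x) :
    DifferentiableAt ℝ (deriv F) x := by
  obtain ⟨s, hs, hF⟩ := h.contDiffOn le_rfl (by simp)
  obtain ⟨t, hts, hto, hxt⟩ := mem_nhds_iff.1 hs
  have h1 : ContDiffOn ℝ 1 (deriv F) t :=
    (hF.mono hts).deriv_of_isOpen hto (by norm_num)
  exact (h1.differentiableOn one_ne_zero).differentiableAt (hto.mem_nhds hxt)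

theorem stmt_5 {N : ℕ} (u : (Fin N → ℝ) → ℝ) (hu : ContDiff ℝ 3 u)
    (hub : ∀ k : ℕ, k ≤ 3 → ∃ C, ∀ x, ‖iteratedFDeriv ℝ k u x‖ ≤ C)
    (η ζ : (Fin N → ℝ) → (Fin N → ℝ))
    (hη : ContDiff ℝ 2 η) (hζ : ContDiff ℝ 2 ζ)
    (hηs : HasCompactSupport η) (hζs : HasCompactSupport ζ)
    (Φ : ℝ → (Fin N → ℝ) → (Fin N → ℝ))
    (hΦ : ∀ t x, Φ t x = x + t • η x + (t ^ 2 / 2) • ζ x)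
    (ψ : ℝ → (Fin N → ℝ) → (Fin N → ℝ)) (ε : ℝ) (hε : 0 < ε)
    (hinv : ∀ t, |t| < ε → ∀ x, Φ t (ψ t x) = x ∧ ψ t (Φ t x) = x)
    (y : Fin N → ℝ) (hψ : ContDiffAt ℝ 2 (fun t => ψ t y) 0) :
    (fun t => u (ψ t y)) 0 = u y ∧
    deriv (fun t => u (ψ t y)) 0 = -(fderiv ℝ u y (η y)) ∧
    deriv (deriv (fun t => u (ψ t y))) 0 =
      iteratedFDeriv ℝ 2 u y ![η y, η y]
        + fderiv ℝ u y ((2 : ℝ) • fderiv ℝ η y (η y) - ζ y) := by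
  set g : ℝ → (Fin N → ℝ) := fun t => ψ t y with hgdef
  set A : ℝ → (Fin N → ℝ) := fun t => η (g t) with hAdef
  set B : ℝ → (Fin N → ℝ) := fun t => ζ (g t) with hBdef
  have hg2 : ContDiffAt ℝ 2 g 0 := hψ
  have hgd : DifferentiableAt ℝ g 0 := hg2.differentiableAt two_ne_zero
  -- g 0 = y
  have hg0 : g 0 = y := by
    have h := (hinv 0 (by simpa using hε) y).2
    rw [hΦ] at h
    simpa using h
  -- key identity near 0
  have key : g =ᶠ[𝓝 0] fun t => y - t • A t - (t ^ 2 / 2) • B t := by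
    filter_upwards [Metric.ball_mem_nhds (0 : ℝ) hε] with t ht
    have ht' : |t| < ε := by simpa [Real.norm_eq_abs] using mem_ball_zero_iff.1 ht
    have h := (hinv t ht' y).1
    rw [hΦ] at h
    have : g t + t • A t + (t ^ 2 / 2) • B t = y := h
    rw [eq_sub_iff_add_eq, eq_sub_iff_add_eq]
    rw [← this]; abel
  -- regularity of A, B
  have hA2 : ContDiffAt ℝ 2 A 0 := (hη.contDiffAt).comp 0 hg2
  have hB2 : ContDiffAt ℝ 2 B 0 := (hζ.contDiffAt).comp 0 hg2
  have hAd : DifferentiableAt ℝ A 0 := hA2.differentiableAt two_ne_zero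
  have hBd : DifferentiableAt ℝ B 0 := hB2.differentiableAt two_ne_zero
  have hA'd : DifferentiableAt ℝ (deriv A) 0 := aux_deriv_diff hA2
  have hB'd : DifferentiableAt ℝ (deriv B) 0 := aux_deriv_diff hB2
  -- the derivative of g near 0
  set D : ℝ → (Fin N → ℝ) :=
    fun t => -A t - t • deriv A t - t • B t - (t ^ 2 / 2) • deriv B t with hDdef
  have hsq : ∀ t : ℝ, HasDerivAt (fun s : ℝ => s ^ 2 / 2) t t := by
    intro t
    have := (hasDerivAt_pow 2 t).div_const 2
    simpa using this
  have hRHS : ∀ t : ℝ, DifferentiableAt ℝ A t → DifferentiableAt ℝ B t →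
      HasDerivAt (fun s => y - s • A s - (s ^ 2 / 2) • B s) (D t) t := by
    intro t hAt hBt
    have h1 : HasDerivAt (fun s : ℝ => s • A s) (t • deriv A t + (1 : ℝ) • A t) t :=
      (hasDerivAt_id t).smul hAt.hasDerivAt
    have h2 : HasDerivAt (fun s : ℝ => (s ^ 2 / 2) • B s)
        ((t ^ 2 / 2) • deriv B t + t • B t) t :=
      (hsq t).smul hBt.hasDerivAt
    have := ((hasDerivAt_const t y).sub h1).sub h2
    refine this.congr_deriv ?_
    simp [hDdef]
    abel
  -- first derivative of g at 0
  have hg'0 : HasDerivAt g (-η y) 0 := by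
    have h := hRHS 0 hAd hBd
    have h' : HasDerivAt g (D 0) 0 := h.congr_of_eventuallyEq key
    have hD0 : D 0 = -η y := by simp [hDdef, hAdef, hg0]
    rwa [hD0] at h'
  have hderivg0 : deriv g 0 = -η y := hg'0.deriv
  -- eventual formula for deriv g
  have hAev : ∀ᶠ t in 𝓝 0, DifferentiableAt ℝ A t := by
    filter_upwards [hA2.eventually (by simp)] with t ht
    exact ht.differentiableAt two_ne_zero
  have hBev : ∀ᶠ t in 𝓝 0, DifferentiableAt ℝ B t := by
    filter_upwards [hB2.eventually (by simp)] with t ht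
    exact ht.differentiableAt two_ne_zero
  have hgev : ∀ᶠ t in 𝓝 0, DifferentiableAt ℝ g t := by
    filter_upwards [hg2.eventually (by simp)] with t ht
    exact ht.differentiableAt two_ne_zero
  have ev : deriv g =ᶠ[𝓝 0] D := by
    filter_upwards [key.eventuallyEq_nhds, hAev, hBev] with t hkey hAt hBt
    have h := (hRHS t hAt hBt).congr_of_eventuallyEq hkey
    exact h.deriv
  -- second derivative of g at 0
  have hD'0 : HasDerivAt D (-deriv A 0 - deriv A 0 - B 0) 0 := by
    have h1 : HasDerivAt (fun t : ℝ => t • deriv A t)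
        ((0 : ℝ) • deriv (deriv A) 0 + (1 : ℝ) • deriv A 0) 0 :=
      (hasDerivAt_id 0).smul hA'd.hasDerivAt
    have h2 : HasDerivAt (fun t : ℝ => t • B t)
        ((0 : ℝ) • deriv B 0 + (1 : ℝ) • B 0) 0 :=
      (hasDerivAt_id 0).smul hBd.hasDerivAt
    have h3 : HasDerivAt (fun t : ℝ => (t ^ 2 / 2) • deriv B t)
        (((0 : ℝ) ^ 2 / 2) • deriv (deriv B) 0 + (0 : ℝ) • deriv B 0) 0 :=
      (hsq 0).smul hB'd.hasDerivAt
    have := ((hAd.hasDerivAt.neg.sub h1).sub h2).sub h3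
    refine this.congr_deriv ?_
    simp
  have hg''0 : HasDerivAt (deriv g) (-deriv A 0 - deriv A 0 - B 0) 0 :=
    hD'0.congr_of_eventuallyEq ev
  -- identify deriv A 0
  have hA'0 : deriv A 0 = -(fderiv ℝ η y (η y)) := by
    have h : HasDerivAt A (fderiv ℝ η (g 0) (deriv g 0)) 0 :=
      ((hη.differentiable two_ne_zero (g 0)).hasFDerivAt).comp_hasDerivAt 0 hgd.hasDerivAt
    rw [h.deriv, hg0, hderivg0, map_neg]
  have hB0 : B 0 = ζ y := by rw [hBdef]; simp [hg0]
  have hw : -deriv A 0 - deriv A 0 - B 0 = (2 : ℝ) • fderiv ℝ η y (η y) - ζ y := by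
    rw [hA'0, hB0, two_smul]; abel
  -- now the composite f = u ∘ g
  have hud : Differentiable ℝ u := hu.differentiable (by norm_num)
  have hf'0 : HasDerivAt (fun t => u (g t)) (fderiv ℝ u (g 0) (deriv g 0)) 0 :=
    ((hud (g 0)).hasFDerivAt).comp_hasDerivAt 0 hgd.hasDerivAt
  refine ⟨congrArg u hg0, ?_, ?_⟩
  · rw [hf'0.deriv, hg0, hderivg0, map_neg]
  · -- second derivative
    have evf : deriv (fun t => u (g t)) =ᶠ[𝓝 0]
        fun t => fderiv ℝ u (g t) (deriv g t) := by
      filter_upwards [hgev] with t hgt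
      exact (((hud (g t)).hasFDerivAt).comp_hasDerivAt t hgt.hasDerivAt).deriv
    have hF : HasDerivAt (fun t => fderiv ℝ u (g t))
        (fderiv ℝ (fderiv ℝ u) (g 0) (deriv g 0)) 0 := by
      have hdu : Differentiable ℝ (fderiv ℝ u) :=
        (hu.fderiv_right (m := 2) (by norm_num)).differentiable (by norm_num)
      exact ((hdu (g 0)).hasFDerivAt).comp_hasDerivAt 0 hgd.hasDerivAt
    have hcomb : HasDerivAt (fun t => fderiv ℝ u (g t) (deriv g t))
        (fderiv ℝ (fderiv ℝ u) (g 0) (deriv g 0) (deriv g 0)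
          + fderiv ℝ u (g 0) (-deriv A 0 - deriv A 0 - B 0)) 0 :=
      hF.clm_apply hg''0
    rw [evf.deriv_eq, hcomb.deriv, hg0, hderivg0, hw,
      iteratedFDeriv_two_apply]
    simp [map_neg]
end

section
/- Let (a_ε), (b_ε) be sequences of nonnegative measurable functions on a finite measure space Ω, and let p, q > 1 with 1/p + 1/q = 1. If ∫_Ω (a_ε^p/p + b_ε^q/q − a_ε·b_ε) → 0 and ∫_Ω (a_ε^p + b_ε^q) is uniformly bounded, and moreover p ≥ 2, then ∫_Ω b_ε^q·|t_ε − 1|^p → 0 where t_ε = a_ε / b_ε^{q/p} (set t_ε = 0 where b_ε = 0). -/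
open MeasureTheory Filter

lemma aux_superadd {r : ℝ} (hr : 1 ≤ r) {x : ℝ} (hx : 0 ≤ x) :
    1 + x ^ r ≤ (1 + x) ^ r := by
  have h := NNReal.add_rpow_le_rpow_add (1 : NNReal) x.toNNReal hr
  have h1 := NNReal.coe_le_coe.mpr h
  push_cast at h1
  simpa [Real.coe_toNNReal x hx, Real.one_rpow] using h1

lemma aux_ge_one {p : ℝ} (hp : 2 ≤ p) {s : ℝ} (hs : 1 ≤ s) :
    (s - 1) ^ p ≤ s ^ p - p * s + (p - 1) := by
  have hp1 : (1 : ℝ) ≤ p := by linarith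
  have hp0 : (0 : ℝ) < p := by linarith
  set F : ℝ → ℝ := fun y => y ^ p - p * y + (p - 1) - (y - 1) ^ p with hF
  have hd : ∀ x ∈ interior (Set.Ici (1 : ℝ)),
      HasDerivWithinAt F (p * x ^ (p - 1) - p - p * (x - 1) ^ (p - 1))
        (interior (Set.Ici (1 : ℝ))) x := by
    intro x hx
    rw [interior_Ici] at hx
    have hx1 : (1 : ℝ) < x := hx
    have h1 : HasDerivAt (fun y : ℝ => y ^ p) (p * x ^ (p - 1)) x :=
      Real.hasDerivAt_rpow_const (Or.inl (by linarith))
    have h2 : HasDerivAt (fun y : ℝ => (y - 1) ^ p) (1 * p * (x - 1) ^ (p - 1)) x :=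
      ((hasDerivAt_id x).sub_const 1).rpow_const (Or.inr hp1)
    have h3 : HasDerivAt (fun y : ℝ => p * y) p x := by
      simpa using (hasDerivAt_id x).const_mul p
    have h5 := ((h1.sub h3).add_const (p - 1)).sub h2
    have h4 : HasDerivAt F (p * x ^ (p - 1) - p - p * (x - 1) ^ (p - 1)) x := by
      exact h5.congr_deriv (by ring)
    exact h4.hasDerivWithinAt
  have hcont : ContinuousOn F (Set.Ici (1 : ℝ)) := by
    apply Continuous.continuousOn
    have c1 : Continuous fun y : ℝ => y ^ p := Real.continuous_rpow_const hp0.le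
    have c2 : Continuous fun y : ℝ => (y - 1) ^ p :=
      (continuous_id.sub continuous_const).rpow_const fun x => Or.inr hp0.le
    exact ((c1.sub (continuous_const.mul continuous_id)).add continuous_const).sub c2
  have hmono : MonotoneOn F (Set.Ici (1 : ℝ)) := by
    apply monotoneOn_of_hasDerivWithinAt_nonneg (convex_Ici 1) hcont hd
    intro x hx
    rw [interior_Ici] at hx
    have hxgt : (1 : ℝ) < x := hx
    have hx0 : (0 : ℝ) ≤ x - 1 := by linarith
    have hsup := aux_superadd (r := p - 1) (by linarith) hx0
    have hx1 : (1 : ℝ) + (x - 1) = x := by ring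
    rw [hx1] at hsup
    nlinarith
  have hF1 : F 1 = 0 := by
    simp [hF, Real.one_rpow, Real.zero_rpow (ne_of_gt hp0)]
  have hm := hmono Set.self_mem_Ici hs hs
  rw [hF1] at hm
  have : (0:ℝ) ≤ s ^ p - p * s + (p - 1) - (s - 1) ^ p := hm
  linarith

lemma aux_le_one {p : ℝ} (hp : 2 ≤ p) {s : ℝ} (hs0 : 0 ≤ s) (hs : s ≤ 1) :
    (1 - s) ^ p ≤ s ^ p - p * s + (p - 1) := by
  have hp1 : (1 : ℝ) ≤ p := by linarith
  have hp0 : (0 : ℝ) < p := by linarith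
  set G : ℝ → ℝ := fun y => y ^ p - p * y + (p - 1) - (1 - y) ^ p with hG
  have hd : ∀ x ∈ interior (Set.Icc (0 : ℝ) 1),
      HasDerivWithinAt G (p * x ^ (p - 1) - p + p * (1 - x) ^ (p - 1))
        (interior (Set.Icc (0 : ℝ) 1)) x := by
    intro x hx
    rw [interior_Icc] at hx
    obtain ⟨hx0, hx1⟩ := hx
    have h1 : HasDerivAt (fun y : ℝ => y ^ p) (p * x ^ (p - 1)) x :=
      Real.hasDerivAt_rpow_const (Or.inl (by linarith))
    have h2 : HasDerivAt (fun y : ℝ => (1 - y) ^ p) ((-1) * p * (1 - x) ^ (p - 1)) x :=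
      ((hasDerivAt_id x).const_sub 1).rpow_const (Or.inr hp1)
    have h3 : HasDerivAt (fun y : ℝ => p * y) p x := by
      simpa using (hasDerivAt_id x).const_mul p
    have h5 := ((h1.sub h3).add_const (p - 1)).sub h2
    have h4 : HasDerivAt G (p * x ^ (p - 1) - p + p * (1 - x) ^ (p - 1)) x := by
      exact h5.congr_deriv (by ring)
    exact h4.hasDerivWithinAt
  have hcont : ContinuousOn G (Set.Icc (0 : ℝ) 1) := by
    apply Continuous.continuousOn
    have c1 : Continuous fun y : ℝ => y ^ p := Real.continuous_rpow_const hp0.le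
    have c2 : Continuous fun y : ℝ => (1 - y) ^ p :=
      (continuous_const.sub continuous_id).rpow_const fun x => Or.inr hp0.le
    exact ((c1.sub (continuous_const.mul continuous_id)).add continuous_const).sub c2
  have hanti : AntitoneOn G (Set.Icc (0 : ℝ) 1) := by
    apply antitoneOn_of_hasDerivWithinAt_nonpos (convex_Icc 0 1) hcont hd
    intro x hx
    rw [interior_Icc] at hx
    obtain ⟨hx0, hx1⟩ := hx
    have e1 : x ^ (p - 1) ≤ x ^ (1 : ℝ) :=
      Real.rpow_le_rpow_of_exponent_ge hx0 hx1.le (by linarith)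
    have e2 : (1 - x) ^ (p - 1) ≤ (1 - x) ^ (1 : ℝ) :=
      Real.rpow_le_rpow_of_exponent_ge (by linarith) (by linarith) (by linarith)
    rw [Real.rpow_one] at e1 e2
    nlinarith
  have hG1 : G 1 = 0 := by
    simp [hG, Real.one_rpow, Real.zero_rpow (ne_of_gt hp0)]
  have hm := hanti (Set.mem_Icc.mpr ⟨hs0, hs⟩) (Set.right_mem_Icc.mpr zero_le_one) hs
  rw [hG1] at hm
  have : (0:ℝ) ≤ s ^ p - p * s + (p - 1) - (1 - s) ^ p := hm
  linarith

lemma aux_key {p : ℝ} (hp : 2 ≤ p) {s : ℝ} (hs : 0 ≤ s) :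
    |s - 1| ^ p ≤ s ^ p - p * s + (p - 1) := by
  rcases le_total s 1 with h | h
  · rw [abs_of_nonpos (by linarith), neg_sub]
    exact aux_le_one hp hs h
  · rw [abs_of_nonneg (by linarith)]
    exact aux_ge_one hp h

theorem stmt_17 {X : Type*} [MeasurableSpace X] (μ : Measure X) [IsFiniteMeasure μ]
    (a b : ℕ → X → ℝ) (ha : ∀ n x, 0 ≤ a n x) (hb : ∀ n x, 0 ≤ b n x)
    (hma : ∀ n, Measurable (a n)) (hmb : ∀ n, Measurable (b n))
    (p q : ℝ) (hp : 2 ≤ p) (hq : 1 < q) (hpq : 1 / p + 1 / q = 1)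
    (hiap : ∀ n, Integrable (fun x => a n x ^ p) μ)
    (hibq : ∀ n, Integrable (fun x => b n x ^ q) μ)
    (hiab : ∀ n, Integrable (fun x => a n x * b n x) μ)
    (t : ℕ → X → ℝ)
    (ht : ∀ n x, t n x = if b n x = 0 then 0 else a n x / (b n x) ^ (q / p))
    (hit : ∀ n, Integrable (fun x => b n x ^ q * |t n x - 1| ^ p) μ)
    (h1 : Tendsto (fun n => ∫ x, (a n x ^ p / p + b n x ^ q / q - a n x * b n x) ∂μ)
      atTop (nhds 0))
    (h2 : ∃ M : ℝ, ∀ n, (∫ x, (a n x ^ p + b n x ^ q) ∂μ) ≤ M) :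
    Tendsto (fun n => ∫ x, b n x ^ q * |t n x - 1| ^ p ∂μ) atTop (nhds 0) := by
  have hp0 : (0 : ℝ) < p := by linarith
  have hq0 : (0 : ℝ) < q := by linarith
  have hqp1 : q / p = q - 1 := by
    have h1p : (1:ℝ)/p = 1 - 1/q := by linarith
    calc q / p = q * (1/p) := by ring
    _ = q * (1 - 1/q) := by rw [h1p]
    _ = q - 1 := by field_simp
  have hpq1 : p / q = p - 1 := by
    have h1q : (1:ℝ)/q = 1 - 1/p := by linarith
    calc p / q = p * (1/q) := by ring
    _ = p * (1 - 1/p) := by rw [h1q]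
    _ = p - 1 := by field_simp
  -- pointwise inequality
  have hpt : ∀ n x, b n x ^ q * |t n x - 1| ^ p
      ≤ p * (a n x ^ p / p + b n x ^ q / q - a n x * b n x) := by
    intro n x
    rcases eq_or_lt_of_le (hb n x) with hbx | hbx
    · have hbx' : b n x = 0 := hbx.symm
      rw [ht n x, if_pos hbx', hbx', Real.zero_rpow (ne_of_gt hq0)]
      have hap : (0:ℝ) ≤ a n x ^ p := Real.rpow_nonneg (ha n x) p
      have : p * (a n x ^ p / p + 0 / q - a n x * 0) = a n x ^ p := by
        field_simp
        ring
      rw [this, zero_mul]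
      exact hap
    · rw [ht n x, if_neg hbx.ne']
      set s := a n x / b n x ^ (q / p) with hsdef
      have hcpos : (0 : ℝ) < b n x ^ (q / p) := Real.rpow_pos_of_pos hbx _
      have hs0 : 0 ≤ s := div_nonneg (ha n x) hcpos.le
      have key := aux_key hp hs0
      have hbq : (0 : ℝ) < b n x ^ q := Real.rpow_pos_of_pos hbx q
      have hmul := mul_le_mul_of_nonneg_left key hbq.le
      have hcp : (b n x ^ (q / p)) ^ p = b n x ^ q := by
        rw [← Real.rpow_mul hbx.le, div_mul_cancel₀ _ (ne_of_gt hp0)]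
      have hsp : b n x ^ q * s ^ p = a n x ^ p := by
        rw [hsdef, Real.div_rpow (ha n x) hcpos.le, hcp,
          mul_div_cancel₀ _ (ne_of_gt hbq)]
      have hst : b n x ^ q * s = a n x * b n x := by
        rw [hsdef]
        rw [div_eq_mul_inv, ← Real.rpow_neg hbx.le, mul_comm (a n x), ← mul_assoc,
          ← Real.rpow_add hbx]
        have : q + -(q / p) = 1 := by rw [hqp1]; ring
        rw [this, Real.rpow_one, mul_comm]
      have hexp : b n x ^ q * (s ^ p - p * s + (p - 1))
          = p * (a n x ^ p / p + b n x ^ q / q - a n x * b n x) := by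
        have e1 : b n x ^ q * (s ^ p - p * s + (p - 1))
            = b n x ^ q * s ^ p - p * (b n x ^ q * s) + (p - 1) * b n x ^ q := by ring
        rw [e1, hsp, hst]
        have e2 : p * (a n x ^ p / p + b n x ^ q / q - a n x * b n x)
            = a n x ^ p + (p / q) * b n x ^ q - p * (a n x * b n x) := by
          field_simp
        rw [e2, hpq1]; ring
      calc b n x ^ q * |s - 1| ^ p ≤ b n x ^ q * (s ^ p - p * s + (p - 1)) := hmul
      _ = p * (a n x ^ p / p + b n x ^ q / q - a n x * b n x) := hexp
  -- integrability of the RHS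
  have hint : ∀ n, Integrable (fun x => a n x ^ p / p + b n x ^ q / q - a n x * b n x) μ :=
    fun n => (((hiap n).div_const p).add ((hibq n).div_const q)).sub (hiab n)
  apply squeeze_zero (g := fun n => p * ∫ x, (a n x ^ p / p + b n x ^ q / q - a n x * b n x) ∂μ)
  · intro n
    apply integral_nonneg
    intro x
    exact mul_nonneg (Real.rpow_nonneg (hb n x) q) (Real.rpow_nonneg (abs_nonneg _) p)
  · intro n
    have := integral_mono (hit n) ((hint n).const_mul p) (fun x => hpt n x)
    rwa [integral_const_mul] at this
  · simpa using h1.const_mul p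
end
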